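/- For every real s > 0 and every λ > 0, (2/Γ(s/2+1)) ∫_λ^∞ r^{s+1} e^{r²}/(e^{r²}−1)² dr = (1/Γ(s/2+1)) · λ^s/(e^{λ²}−1) + (1/Γ(s/2)) ∫_{λ²}^∞ r^{s/2−1}/(e^r−1) dr. -/

import Mathlib

open MeasureTheory Set
open Real Filter Topology

lemma exp_sub_one_pos' {x : ℝ} (hx : 0 < x) : 0 < Real.exp x - 1 := by
  have := Real.exp_lt_exp.2 hx
  simp only [Real.exp_zero] at this
  linarith [Real.exp_zero ▸ (Real.exp_lt_exp.2 hx)]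

lemma one_sub_exp_neg_pos {c : ℝ} (hc : 0 < c) : 0 < 1 - Real.exp (-c) := by
  have : Real.exp (-c) < 1 := Real.exp_lt_one_iff.2 (by linarith)
  linarith

lemma inv_exp_sub_one_le {c x : ℝ} (hc : 0 < c) (hx : c ≤ x) :
    (Real.exp x - 1)⁻¹ ≤ (1 - Real.exp (-c))⁻¹ * Real.exp (-x) := by
  have hx0 : 0 < x := lt_of_lt_of_le hc hx
  have h1 : (1 - Real.exp (-c)) * Real.exp x ≤ Real.exp x - 1 := by
    have : (1:ℝ) ≤ Real.exp (x - c) := Real.one_le_exp (by linarith)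
    have h2 : Real.exp (-c) * Real.exp x = Real.exp (x - c) := by
      rw [← Real.exp_add]; ring_nf
    nlinarith [Real.exp_pos x]
  have hpos : 0 < (1 - Real.exp (-c)) * Real.exp x :=
    mul_pos (one_sub_exp_neg_pos hc) (Real.exp_pos x)
  calc (Real.exp x - 1)⁻¹ ≤ ((1 - Real.exp (-c)) * Real.exp x)⁻¹ :=
        inv_anti₀ hpos h1
    _ = (1 - Real.exp (-c))⁻¹ * Real.exp (-x) := by
        rw [mul_inv, Real.exp_neg]
        simp [Real.exp_neg]

lemma integrableOn_rpow_div_exp_sq {p c : ℝ} (hp : -1 < p) (hc : 0 < c) :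
    IntegrableOn (fun x => x ^ p * Real.exp x / (Real.exp x - 1) ^ 2) (Ioi c) := by
  set K := (1 - Real.exp (-c))⁻¹ with hK
  have hG := Real.GammaIntegral_convergent (show (0:ℝ) < p + 1 by linarith)
  simp only [add_sub_cancel_right] at hG
  have href : IntegrableOn (fun x => K ^ 2 * (Real.exp (-x) * x ^ p)) (Ioi c) :=
    (hG.mono_set (Ioi_subset_Ioi hc.le)).const_mul _
  refine href.mono' ?_ ?_
  · refine ContinuousOn.aestronglyMeasurable ?_ measurableSet_Ioi
    refine ContinuousOn.div
      ((continuousOn_id.rpow_const fun x hx => Or.inl (ne_of_gt (lt_trans hc hx))).mul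
        Real.continuous_exp.continuousOn)
      ((Real.continuous_exp.sub continuous_const).pow 2).continuousOn ?_
    intro x hx
    exact pow_ne_zero 2 (ne_of_gt (exp_sub_one_pos' (lt_trans hc hx)))
  · rw [ae_restrict_iff' measurableSet_Ioi]
    filter_upwards with x hx
    have hx0 : 0 < x := lt_trans hc hx
    have hE : 0 < Real.exp x - 1 := exp_sub_one_pos' hx0
    rw [Real.norm_eq_abs, abs_of_nonneg (by positivity)]
    have hinv := inv_exp_sub_one_le hc hx.le
    have h2 : ((Real.exp x - 1)⁻¹) ^ 2 ≤ (K * Real.exp (-x)) ^ 2 := by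
      apply pow_le_pow_left₀ (by positivity) hinv
    calc x ^ p * Real.exp x / (Real.exp x - 1) ^ 2
        = x ^ p * Real.exp x * ((Real.exp x - 1)⁻¹) ^ 2 := by
          rw [div_eq_mul_inv, inv_pow]
      _ ≤ x ^ p * Real.exp x * (K * Real.exp (-x)) ^ 2 := by
          apply mul_le_mul_of_nonneg_left h2 (by positivity)
      _ = K ^ 2 * (Real.exp (-x) * x ^ p) := by
          rw [mul_pow, Real.exp_neg]
          have := Real.exp_ne_zero x
          field_simp

lemma integrableOn_rpow_div_exp {p c : ℝ} (hp : -1 < p) (hc : 0 < c) :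
    IntegrableOn (fun x => x ^ p / (Real.exp x - 1)) (Ioi c) := by
  set K := (1 - Real.exp (-c))⁻¹ with hK
  have hG := Real.GammaIntegral_convergent (show (0:ℝ) < p + 1 by linarith)
  simp only [add_sub_cancel_right] at hG
  have href : IntegrableOn (fun x => K * (Real.exp (-x) * x ^ p)) (Ioi c) :=
    (hG.mono_set (Ioi_subset_Ioi hc.le)).const_mul _
  refine href.mono' ?_ ?_
  · refine ContinuousOn.aestronglyMeasurable ?_ measurableSet_Ioi
    refine ContinuousOn.div
      (continuousOn_id.rpow_const fun x hx => Or.inl (ne_of_gt (lt_trans hc hx)))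
      (Real.continuous_exp.sub continuous_const).continuousOn ?_
    intro x hx
    exact ne_of_gt (exp_sub_one_pos' (lt_trans hc hx))
  · rw [ae_restrict_iff' measurableSet_Ioi]
    filter_upwards with x hx
    have hx0 : 0 < x := lt_trans hc hx
    have hE : 0 < Real.exp x - 1 := exp_sub_one_pos' hx0
    rw [Real.norm_eq_abs, abs_of_nonneg (by positivity)]
    have hinv := inv_exp_sub_one_le hc hx.le
    calc x ^ p / (Real.exp x - 1) = x ^ p * (Real.exp x - 1)⁻¹ := by
          rw [div_eq_mul_inv]
      _ ≤ x ^ p * (K * Real.exp (-x)) :=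
          mul_le_mul_of_nonneg_left hinv (Real.rpow_nonneg hx0.le p)
      _ = K * (Real.exp (-x) * x ^ p) := by ring

lemma integrableOn_orig {s lam : ℝ} (hs : 0 < s) (hlam : 0 < lam) :
    IntegrableOn (fun x => x ^ (s + 1) * Real.exp (x ^ 2) / (Real.exp (x ^ 2) - 1) ^ 2)
      (Ici lam) := by
  have hl2 : 0 < lam ^ 2 := by positivity
  set K := (1 - Real.exp (-lam ^ 2))⁻¹ with hK
  have href : Integrable (fun x : ℝ => K ^ 2 * (x ^ (s + 1) * Real.exp (-1 * x ^ 2))) :=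
    (integrable_rpow_mul_exp_neg_mul_sq one_pos (show (-1:ℝ) < s + 1 by linarith)).const_mul _
  refine (href.integrableOn).mono' ?_ ?_
  · refine ContinuousOn.aestronglyMeasurable ?_ measurableSet_Ici
    refine ContinuousOn.div
      ((continuousOn_id.rpow_const fun x hx => Or.inl (ne_of_gt (lt_of_lt_of_le hlam hx))).mul
        (Real.continuous_exp.comp (continuous_pow 2)).continuousOn)
      ((((Real.continuous_exp.comp (continuous_pow 2)).sub continuous_const).pow 2).continuousOn) ?_
    intro x hx
    have hx2 : 0 < x ^ 2 := pow_pos (lt_of_lt_of_le hlam hx) 2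
    exact pow_ne_zero 2 (ne_of_gt (exp_sub_one_pos' hx2))
  · rw [ae_restrict_iff' measurableSet_Ici]
    filter_upwards with x hx
    have hx0 : 0 < x := lt_of_lt_of_le hlam hx
    have hx2 : 0 < x ^ 2 := pow_pos hx0 2
    have hE : 0 < Real.exp (x ^ 2) - 1 := exp_sub_one_pos' hx2
    rw [Real.norm_eq_abs, abs_of_nonneg (by positivity)]
    have hsq : lam ^ 2 ≤ x ^ 2 := pow_le_pow_left₀ hlam.le hx 2
    have hinv := inv_exp_sub_one_le hl2 hsq
    have h2 : ((Real.exp (x ^ 2) - 1)⁻¹) ^ 2 ≤ (K * Real.exp (-x ^ 2)) ^ 2 := by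
      apply pow_le_pow_left₀ (by positivity) ?_
      simpa using hinv
    calc x ^ (s + 1) * Real.exp (x ^ 2) / (Real.exp (x ^ 2) - 1) ^ 2
        = x ^ (s + 1) * Real.exp (x ^ 2) * ((Real.exp (x ^ 2) - 1)⁻¹) ^ 2 := by
          rw [div_eq_mul_inv, inv_pow]
      _ ≤ x ^ (s + 1) * Real.exp (x ^ 2) * (K * Real.exp (-x ^ 2)) ^ 2 := by
          apply mul_le_mul_of_nonneg_left h2 (by positivity)
      _ = K ^ 2 * (x ^ (s + 1) * Real.exp (-1 * x ^ 2)) := by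
          rw [mul_pow, Real.exp_neg, neg_one_mul, Real.exp_neg]
          have := Real.exp_ne_zero (x ^ 2)
          field_simp

lemma ptwise {s x : ℝ} (hx0 : 0 < x) :
    x ^ (s + 1) * Real.exp (x ^ 2) / (Real.exp (x ^ 2) - 1) ^ 2
      = ((x ^ 2 : ℝ) ^ (s / 2) * Real.exp (x ^ 2) / (Real.exp (x ^ 2) - 1) ^ 2 / 2) * (2 * x) := by
  have h1 : ((x ^ 2 : ℝ)) ^ (s / 2) = x ^ s := by
    rw [← Real.rpow_natCast x 2, ← Real.rpow_mul hx0.le]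
    congr 1
    ring
  rw [h1, Real.rpow_add_one hx0.ne']
  ring

lemma tendsto_uv_top (s : ℝ) :
    Filter.Tendsto (fun x : ℝ => x ^ (s / 2) * -(Real.exp x - 1)⁻¹) atTop (𝓝 0) := by
  have h1 : Filter.Tendsto (fun x : ℝ => x ^ (s / 2) * Real.exp (-1 * x)) atTop (𝓝 0) :=
    tendsto_rpow_mul_exp_neg_mul_atTop_nhds_zero (s / 2) 1 one_pos
  have h2 : Filter.Tendsto (fun x : ℝ => -(1 - Real.exp (-x))⁻¹) atTop (𝓝 (-(1 - 0)⁻¹)) := by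
    exact ((tendsto_const_nhds.sub (Real.tendsto_exp_neg_atTop_nhds_zero)).inv₀ (by norm_num)).neg
  have h3 := h1.mul h2
  rw [zero_mul] at h3
  apply h3.congr'
  filter_upwards [Filter.eventually_gt_atTop (0 : ℝ)] with x hx
  have hE : 0 < Real.exp x - 1 := exp_sub_one_pos' hx
  have h4 : 0 < 1 - Real.exp (-x) := one_sub_exp_neg_pos hx
  have h5 : (Real.exp x - 1)⁻¹ = Real.exp (-1 * x) * (1 - Real.exp (-x))⁻¹ := by
    rw [neg_one_mul, Real.exp_neg, ← mul_inv]
    rw [Real.exp_neg] at h4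
    congr 1
    field_simp
  show x ^ (s / 2) * Real.exp (-1 * x) * -(1 - Real.exp (-x))⁻¹
      = x ^ (s / 2) * -(Real.exp x - 1)⁻¹
  rw [h5]
  ring

lemma sq_rpow_half {x : ℝ} (hx : 0 < x) (s : ℝ) : ((x ^ 2 : ℝ)) ^ (s / 2) = x ^ s := by
  rw [← Real.rpow_natCast x 2, ← Real.rpow_mul hx.le]
  congr 1
  ring


/-- For every `s > 0` and `λ > 0`,
`(2/Γ(s/2+1)) ∫_λ^∞ r^{s+1} e^{r²}/(e^{r²}-1)² dr
  = (1/Γ(s/2+1)) λ^s/(e^{λ²}-1) + (1/Γ(s/2)) ∫_{λ²}^∞ r^{s/2-1}/(e^r-1) dr`. -/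
theorem statement17 (s lam : ℝ) (hs : 0 < s) (hlam : 0 < lam) :
    (2 / Real.Gamma (s / 2 + 1)) *
        ∫ r in Ioi lam, r ^ (s + 1) * Real.exp (r ^ 2) / (Real.exp (r ^ 2) - 1) ^ 2 =
      (1 / Real.Gamma (s / 2 + 1)) * (lam ^ s / (Real.exp (lam ^ 2) - 1)) +
      (1 / Real.Gamma (s / 2)) *
        ∫ r in Ioi (lam ^ 2), r ^ (s / 2 - 1) / (Real.exp r - 1) := by
  have hl2 : 0 < lam ^ 2 := pow_pos hlam 2
  have hs2 : (0:ℝ) < s / 2 := half_pos hs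
  set g : ℝ → ℝ := fun u => u ^ (s / 2) * Real.exp u / (Real.exp u - 1) ^ 2 / 2 with hgdef
  have hc2 : 0 < lam ^ 2 / 2 := half_pos hl2
  have hgc : ContinuousOn g (Ioi (lam ^ 2 / 2)) := by
    apply ContinuousOn.div_const
    refine ContinuousOn.div
      ((continuousOn_id.rpow_const fun x hx => Or.inl (ne_of_gt (lt_trans hc2 hx))).mul
        Real.continuous_exp.continuousOn)
      ((Real.continuous_exp.sub continuous_const).pow 2).continuousOn ?_
    intro x hx
    exact pow_ne_zero 2 (ne_of_gt (exp_sub_one_pos' (lt_trans hc2 hx)))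
  have himIoi : (fun x : ℝ => x ^ 2) '' Ioi lam ⊆ Ioi (lam ^ 2 / 2) := by
    rintro _ ⟨x, hx, rfl⟩
    simp only [mem_Ioi] at *
    nlinarith
  have himIci : (fun x : ℝ => x ^ 2) '' Ici lam ⊆ Ioi (lam ^ 2 / 2) := by
    rintro _ ⟨x, hx, rfl⟩
    simp only [mem_Ici, mem_Ioi] at *
    nlinarith
  have hg1 : IntegrableOn g (Ioi (lam ^ 2 / 2)) :=
    (integrableOn_rpow_div_exp_sq (by linarith : (-1:ℝ) < s / 2) hc2).div_const 2
  have hsub : (∫ r in Ioi lam, r ^ (s + 1) * Real.exp (r ^ 2) / (Real.exp (r ^ 2) - 1) ^ 2)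
      = ∫ u in Ioi (lam ^ 2), g u := by
    have key := MeasureTheory.integral_comp_mul_deriv_Ioi (f := fun x : ℝ => x ^ 2)
      (f' := fun x => 2 * x) (g := g) (a := lam)
      (continuous_pow 2).continuousOn
      (tendsto_pow_atTop two_ne_zero)
      (fun x hx => by
        have h : HasDerivWithinAt (fun x : ℝ => x ^ 2) (2 * x) (Ioi x) x := by
          simpa using (hasDerivAt_pow 2 x).hasDerivWithinAt (s := Ioi x)
        exact h)
      (hgc.mono himIoi)
      (hg1.mono_set himIci)
      ((integrableOn_orig hs hlam).congr_fun
        (fun x hx => ptwise (lt_of_lt_of_le hlam hx)) measurableSet_Ici)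
    rw [← key]
    apply MeasureTheory.setIntegral_congr_fun measurableSet_Ioi
    intro x hx
    exact ptwise (lt_trans hlam hx)
  have hu : ∀ x ∈ Ioi (lam ^ 2), HasDerivAt (fun x : ℝ => x ^ (s / 2))
      (s / 2 * x ^ (s / 2 - 1)) x :=
    fun x hx => Real.hasDerivAt_rpow_const (Or.inl (ne_of_gt (lt_trans hl2 hx)))
  have hv : ∀ x ∈ Ioi (lam ^ 2), HasDerivAt (fun x : ℝ => -(Real.exp x - 1)⁻¹)
      (Real.exp x / (Real.exp x - 1) ^ 2) x := by
    intro x hx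
    have hne := (exp_sub_one_pos' (lt_trans hl2 hx)).ne'
    have h := (((Real.hasDerivAt_exp x).sub_const 1).inv hne).neg
    exact h.congr_deriv (by ring)
  have huv' : IntegrableOn
      ((fun x : ℝ => x ^ (s / 2)) * fun x => Real.exp x / (Real.exp x - 1) ^ 2)
      (Ioi (lam ^ 2)) := by
    apply (integrableOn_rpow_div_exp_sq (by linarith : (-1:ℝ) < s / 2) hl2).congr_fun ?_
      measurableSet_Ioi
    intro x hx
    simp [mul_div_assoc]
  have hu'v : IntegrableOn
      ((fun x : ℝ => s / 2 * x ^ (s / 2 - 1)) * fun x => -(Real.exp x - 1)⁻¹)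
      (Ioi (lam ^ 2)) := by
    have hbase : IntegrableOn (fun x : ℝ => -(s / 2) * (x ^ (s / 2 - 1) / (Real.exp x - 1)))
        (Ioi (lam ^ 2)) :=
      (integrableOn_rpow_div_exp (by linarith : (-1:ℝ) < s / 2 - 1) hl2).const_mul (-(s / 2))
    apply hbase.congr_fun ?_ measurableSet_Ioi
    intro x hx
    simp only [Pi.mul_apply]
    rw [div_eq_mul_inv]
    ring
  have h_zero : Filter.Tendsto ((fun x : ℝ => x ^ (s / 2)) * fun x => -(Real.exp x - 1)⁻¹)
      (nhdsWithin (lam ^ 2) (Ioi (lam ^ 2)))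
      (𝓝 (-(lam ^ s / (Real.exp (lam ^ 2) - 1)))) := by
    have hct : ContinuousAt (fun x : ℝ => x ^ (s / 2) * -(Real.exp x - 1)⁻¹) (lam ^ 2) := by
      apply ContinuousAt.mul
      · exact Real.continuousAt_rpow_const _ _ (Or.inl hl2.ne')
      · exact ((Real.continuous_exp.continuousAt.sub continuousAt_const).inv₀
          (exp_sub_one_pos' hl2).ne').neg
    have h : Filter.Tendsto (fun x : ℝ => x ^ (s / 2) * -(Real.exp x - 1)⁻¹)
        (nhdsWithin (lam ^ 2) (Ioi (lam ^ 2)))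
        (𝓝 ((lam ^ 2 : ℝ) ^ (s / 2) * -(Real.exp (lam ^ 2) - 1)⁻¹)) :=
      hct.tendsto.mono_left nhdsWithin_le_nhds
    have hval : (lam ^ 2 : ℝ) ^ (s / 2) * -(Real.exp (lam ^ 2) - 1)⁻¹
        = -(lam ^ s / (Real.exp (lam ^ 2) - 1)) := by
      rw [sq_rpow_half hlam, div_eq_mul_inv]
      ring
    rw [hval] at h
    exact h
  have h_infty : Filter.Tendsto ((fun x : ℝ => x ^ (s / 2)) * fun x => -(Real.exp x - 1)⁻¹)
      Filter.atTop (𝓝 0) := tendsto_uv_top s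
  have ibp := MeasureTheory.integral_Ioi_mul_deriv_eq_deriv_mul hu hv huv' hu'v h_zero h_infty
  have hI2 : (∫ x in Ioi (lam ^ 2), s / 2 * x ^ (s / 2 - 1) * -(Real.exp x - 1)⁻¹)
      = -(s / 2) * ∫ x in Ioi (lam ^ 2), x ^ (s / 2 - 1) / (Real.exp x - 1) := by
    rw [← MeasureTheory.integral_const_mul]
    apply MeasureTheory.setIntegral_congr_fun measurableSet_Ioi
    intro x hx
    rw [div_eq_mul_inv]
    ring
  rw [hI2] at ibp
  have hJ : (∫ u in Ioi (lam ^ 2), g u)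
      = (∫ x in Ioi (lam ^ 2), x ^ (s / 2) * (Real.exp x / (Real.exp x - 1) ^ 2)) / 2 := by
    rw [← MeasureTheory.integral_div]
    apply MeasureTheory.setIntegral_congr_fun measurableSet_Ioi
    intro x hx
    simp [hgdef, mul_div_assoc]
  rw [hsub, hJ, ibp]
  have hG : Real.Gamma (s / 2 + 1) = s / 2 * Real.Gamma (s / 2) := Real.Gamma_add_one hs2.ne'
  have hGpos : 0 < Real.Gamma (s / 2) := Real.Gamma_pos_of_pos hs2
  rw [hG]
  set A := lam ^ s / (Real.exp (lam ^ 2) - 1) with hA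
  set I := ∫ x in Ioi (lam ^ 2), x ^ (s / 2 - 1) / (Real.exp x - 1) with hI
  have h1 : Real.Gamma (s / 2) ≠ 0 := hGpos.ne'
  have h2 : s ≠ 0 := hs.ne'
  field_simp
  ring
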